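/- arXiv:1504.06987 — 7 statements merged into one kernel-verified Lean document; each statement's English description precedes it below -/
import Mathlib

section
/- Let n be an odd positive integer and let X_1, …, X_n be independent real-valued random variables on a probability space. Suppose there are μ ∈ ℝ, ε > 0 and γ ∈ [0, 1/2) such that for every i, Pr[|X_i − μ| > ε] ≤ γ. Then the median of X_1, …, X_n satisfies Pr[|median(X_1,…,X_n) − μ| > ε] ≤ exp(−2n(1/2 − γ)²). -/
section Helpers
open Real

theorem hoeff_bern (γ : ℝ) (hγ0 : 0 ≤ γ) (hγ1 : γ < 1) (t : ℝ) (ht : 0 ≤ t) :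
    1 - γ + γ * exp t ≤ exp (γ * t + t ^ 2 / 8) := by
  have hD : ∀ s : ℝ, 0 < 1 - γ + γ * exp s := fun s => by
    nlinarith [exp_pos s, mul_nonneg hγ0 (exp_pos s).le]
  set f : ℝ → ℝ := fun s => γ * s + s ^ 2 / 8 - log (1 - γ + γ * exp s) with hf
  set g : ℝ → ℝ := fun s => γ + s / 4 - γ * exp s / (1 - γ + γ * exp s) with hg
  have hDder : ∀ s : ℝ, HasDerivAt (fun s => 1 - γ + γ * exp s) (γ * exp s) s := fun s =>
    ((Real.hasDerivAt_exp s).const_mul γ).const_add (1 - γ)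
  have hf' : ∀ s, HasDerivAt f (g s) s := by
    intro s
    have h1 : HasDerivAt (fun s : ℝ => γ * s + s ^ 2 / 8) (γ + s / 4) s := by
      have := ((hasDerivAt_pow 2 s).div_const 8).const_add 0
      have h2 := (hasDerivAt_id s).const_mul γ
      exact (h2.add ((hasDerivAt_pow 2 s).div_const 8)).congr_deriv (by ring)
    have h3 : HasDerivAt (fun s => log (1 - γ + γ * exp s))
        (γ * exp s / (1 - γ + γ * exp s)) s := (hDder s).log (hD s).ne'
    exact h1.sub h3
  have hg' : ∀ s, HasDerivAt g
      (1 / 4 - (γ * exp s * (1 - γ + γ * exp s) - γ * exp s * (γ * exp s)) /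
        (1 - γ + γ * exp s) ^ 2) s := by
    intro s
    have h1 : HasDerivAt (fun s : ℝ => γ + s / 4) (1 / 4) s := by
      simpa using ((hasDerivAt_id s).div_const 4).const_add γ
    have h2 : HasDerivAt (fun s => γ * exp s / (1 - γ + γ * exp s))
        ((γ * exp s * (1 - γ + γ * exp s) - γ * exp s * (γ * exp s)) /
          (1 - γ + γ * exp s) ^ 2) s :=
      ((Real.hasDerivAt_exp s).const_mul γ).div (hDder s) (hD s).ne'
    exact h1.sub h2
  have hg_mono : Monotone g := by
    apply monotone_of_deriv_nonneg (fun s => (hg' s).differentiableAt)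
    intro s
    rw [(hg' s).deriv]
    have h1 := hD s
    have h2 := exp_pos s
    have hsq := sq_nonneg (γ * exp s - (1 - γ))
    rw [sub_nonneg, div_le_iff₀ (by positivity)]
    nlinarith [sq_nonneg (γ * exp s - (1 - γ))]
  have hg0 : g 0 = 0 := by simp [hg]
  have hgnn : ∀ s, 0 ≤ s → 0 ≤ g s := fun s hs => hg0 ▸ hg_mono hs
  have hf_mono : MonotoneOn f (Set.Ici 0) := by
    apply monotoneOn_of_deriv_nonneg (convex_Ici 0)
      (fun s _ => (hf' s).differentiableAt.continuousAt.continuousWithinAt)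
      (fun s _ => (hf' s).differentiableAt.differentiableWithinAt)
    intro s hs
    rw [(hf' s).deriv]
    exact hgnn s (le_of_lt (by simpa using hs))
  have hf0 : f 0 = 0 := by simp [hf]
  have hft : 0 ≤ f t := hf0 ▸ hf_mono Set.self_mem_Ici (Set.mem_Ici.2 ht) ht
  have : log (1 - γ + γ * exp t) ≤ γ * t + t ^ 2 / 8 := by
    simp only [hf] at hft; linarith
  calc 1 - γ + γ * exp t = exp (log (1 - γ + γ * exp t)) := (exp_log (hD t)).symm
    _ ≤ _ := exp_le_exp.2 this

end Helpers

theorem count_ge_of_sorted_hi (l : List ℝ) (hs : l.Pairwise (· ≤ ·)) (k : ℕ) (hk : k < l.length)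
    (μ ε : ℝ) (h : μ + ε < l.get ⟨k, hk⟩) :
    l.length - k ≤ l.countP (fun v => decide (ε < |v - μ|)) := by
  have hdrop : (l.drop k).countP (fun v => decide (ε < |v - μ|)) = l.length - k := by
    rw [List.countP_eq_length.2, List.length_drop]
    intro a ha
    obtain ⟨j, hj, rfl⟩ := List.get_of_mem ha
    have hb : k + j.1 < l.length := by have := j.2; simp [List.length_drop] at this; omega
    have heq : (l.drop k).get j = l.get ⟨k + j.1, hb⟩ := by
      simp [List.get_eq_getElem, List.getElem_drop]
    have h1 : l.get ⟨k, hk⟩ ≤ l.get ⟨k + j.1, hb⟩ := hs.rel_get_of_le (by simp [Fin.le_def])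
    simp only [decide_eq_true_eq, heq]
    calc ε < l.get ⟨k + j.1, hb⟩ - μ := by linarith
      _ ≤ |l.get ⟨k + j.1, hb⟩ - μ| := le_abs_self _
  calc l.length - k = (l.drop k).countP _ := hdrop.symm
    _ ≤ l.countP (fun v => decide (ε < |v - μ|)) := by
        conv_rhs => rw [← List.take_append_drop k l]
        rw [List.countP_append]; omega

theorem count_ge_of_sorted_lo (l : List ℝ) (hs : l.Pairwise (· ≤ ·)) (k : ℕ) (hk : k < l.length)
    (μ ε : ℝ) (h : l.get ⟨k, hk⟩ < μ - ε) :
    k + 1 ≤ l.countP (fun v => decide (ε < |v - μ|)) := by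
  have htake : (l.take (k + 1)).countP (fun v => decide (ε < |v - μ|)) = k + 1 := by
    rw [List.countP_eq_length.2, List.length_take, min_eq_left (by omega)]
    intro a ha
    obtain ⟨j, hj, rfl⟩ := List.get_of_mem ha
    have hb : j.1 < l.length := by have := j.2; simp [List.length_take] at this; omega
    have hjk : j.1 ≤ k := by have := j.2; simp [List.length_take] at this; omega
    have heq : (l.take (k + 1)).get j = l.get ⟨j.1, hb⟩ := by
      simp [List.get_eq_getElem, List.getElem_take]
    have h1 : l.get ⟨j.1, hb⟩ ≤ l.get ⟨k, hk⟩ := hs.rel_get_of_le (by simp [Fin.le_def, hjk])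
    simp only [decide_eq_true_eq, heq]
    rw [abs_sub_comm]
    calc ε < μ - l.get ⟨j.1, hb⟩ := by linarith
      _ ≤ |μ - l.get ⟨j.1, hb⟩| := le_abs_self _
  calc k + 1 = (l.take (k + 1)).countP _ := htake.symm
    _ ≤ l.countP (fun v => decide (ε < |v - μ|)) := by
        conv_rhs => rw [← List.take_append_drop (k + 1) l]
        rw [List.countP_append]; omega

open MeasureTheory ProbabilityTheory

theorem median_powering_lemma {Ω : Type*} [MeasureSpace Ω]
    [IsProbabilityMeasure (ℙ : Measure Ω)]
    (n : ℕ) (hodd : Odd n) (hpos : 0 < n)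
    (X : Fin n → Ω → ℝ) (hXmeas : ∀ i, Measurable (X i))
    (hindep : iIndepFun (m := fun _ => Real.measurableSpace) X ℙ)
    (μ ε γ : ℝ) (hε : 0 < ε) (hγ0 : 0 ≤ γ) (hγ : γ < 1 / 2)
    (hacc : ∀ i, (ℙ : Measure Ω) {ω | ε < |X i ω - μ|} ≤ ENNReal.ofReal γ)
    (median : Ω → ℝ)
    (hmedian : ∀ ω, median ω =
      (Multiset.sort (Multiset.map (fun i => X i ω) Finset.univ.val) (· ≤ ·)).getD
        ((n - 1) / 2) 0) :
    (ℙ : Measure Ω) {ω | ε < |median ω - μ|} ≤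
      ENNReal.ofReal (Real.exp (-2 * n * (1 / 2 - γ) ^ 2)) := by
  classical
  obtain ⟨m, hm⟩ := hodd
  set t : ℝ := 2 - 4 * γ with ht_def
  have ht : 0 < t := by rw [ht_def]; linarith
  set φ : ℝ → ℝ := fun v => if ε < |v - μ| then 1 else 0 with hφ
  have hφmeas : Measurable φ := by
    apply Measurable.ite _ measurable_const measurable_const
    exact measurableSet_lt measurable_const ((measurable_id.sub_const μ).abs)
  set Y : Fin n → Ω → ℝ := fun i => φ ∘ X i with hY
  have hYmeas : ∀ i, Measurable (Y i) := fun i => hφmeas.comp (hXmeas i)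
  have hYindep : iIndepFun (m := fun _ => Real.measurableSpace) Y ℙ :=
    hindep.comp (fun _ => φ) (fun _ => hφmeas)
  have hAmeas : ∀ i, MeasurableSet {ω | ε < |X i ω - μ|} := fun i =>
    measurableSet_lt measurable_const ((hXmeas i).sub_const μ).abs
  have hexp_eq : ∀ i, (fun ω => Real.exp (t * Y i ω)) =
      fun ω => 1 + ({ω | ε < |X i ω - μ|}.indicator (fun _ => Real.exp t - 1) ω) := by
    intro i; funext ω
    by_cases h : ε < |X i ω - μ|
    · simp [hY, hφ, h, Set.indicator_of_mem, Set.mem_setOf_eq]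
    · simp [hY, hφ, h, Set.indicator_of_notMem, Set.mem_setOf_eq]
  have h_int : ∀ i, Integrable (fun ω => Real.exp (t * Y i ω)) ℙ := by
    intro i; rw [hexp_eq i]
    exact (integrable_const 1).add ((integrable_const _).indicator (hAmeas i))
  have hmgf : ∀ i, mgf (Y i) ℙ t ≤ 1 - γ + γ * Real.exp t := by
    intro i
    have hp : ((ℙ : Measure Ω) {ω | ε < |X i ω - μ|}).toReal ≤ γ :=
      ENNReal.toReal_le_of_le_ofReal hγ0 (hacc i)
    have hp0 : (0:ℝ) ≤ ((ℙ : Measure Ω) {ω | ε < |X i ω - μ|}).toReal := ENNReal.toReal_nonneg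
    have hmeq : mgf (Y i) ℙ t
        = 1 + (Real.exp t - 1) * ((ℙ : Measure Ω) {ω | ε < |X i ω - μ|}).toReal := by
      simp only [mgf]
      rw [hexp_eq i,
        integral_add (integrable_const 1) ((integrable_const _).indicator (hAmeas i)),
        integral_indicator_const _ (hAmeas i)]
      simp [mul_comm, Measure.real]
    rw [hmeq]
    have het : 1 ≤ Real.exp t := Real.one_le_exp ht.le
    nlinarith
  set S : Ω → ℝ := ∑ i, Y i with hS
  have h_int_sum : Integrable (fun ω => Real.exp (t * S ω)) ℙ :=
    hYindep.integrable_exp_mul_sum hYmeas (fun i _ => h_int i)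
  have hcher := measure_ge_le_exp_mul_mgf (μ := ℙ) (X := S) ((n:ℝ)/2) ht.le h_int_sum
  have hprod : mgf S ℙ t = ∏ i, mgf (Y i) ℙ t := hYindep.mgf_sum hYmeas Finset.univ
  have hDnn : (0:ℝ) ≤ 1 - γ + γ * Real.exp t := by nlinarith [Real.exp_pos t]
  have hmgfS : mgf S ℙ t ≤ (1 - γ + γ * Real.exp t) ^ n := by
    rw [hprod]
    calc ∏ i, mgf (Y i) ℙ t ≤ ∏ _i : Fin n, (1 - γ + γ * Real.exp t) :=
        Finset.prod_le_prod (fun i _ => mgf_nonneg) (fun i _ => hmgf i)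
      _ = (1 - γ + γ * Real.exp t) ^ n := by simp [Finset.prod_const]
  have hhoeff := hoeff_bern γ hγ0 (by linarith) t ht.le
  have hbound : ((ℙ : Measure Ω) {ω | (n:ℝ)/2 ≤ S ω}).toReal
      ≤ Real.exp (-2 * n * (1/2 - γ)^2) := by
    refine hcher.trans ?_
    calc Real.exp (-t * ((n:ℝ)/2)) * mgf S ℙ t
        ≤ Real.exp (-t * ((n:ℝ)/2)) * Real.exp (γ*t + t^2/8) ^ n := by
          have := hmgfS.trans (pow_le_pow_left₀ hDnn hhoeff n)
          exact mul_le_mul_of_nonneg_left this (Real.exp_pos _).le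
      _ = Real.exp (-t * ((n:ℝ)/2) + n * (γ*t + t^2/8)) := by
          rw [← Real.exp_nat_mul, ← Real.exp_add]
      _ = Real.exp (-2 * n * (1/2 - γ)^2) := by rw [ht_def]; congr 1; ring
  have hsub : {ω | ε < |median ω - μ|} ⊆ {ω | (n:ℝ)/2 ≤ S ω} := by
    intro ω hω
    simp only [Set.mem_setOf_eq] at hω ⊢
    set l := Multiset.sort (Multiset.map (fun i => X i ω) Finset.univ.val) (· ≤ ·) with hl
    have hlen : l.length = n := by rw [hl, Multiset.length_sort]; simp
    have hk : m < l.length := by omega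
    have hsort : l.Pairwise (· ≤ ·) := Multiset.pairwise_sort _ _
    have hmed : median ω = l.get ⟨m, hk⟩ := by
      rw [hmedian ω]
      have h2 : (n - 1) / 2 = m := by omega
      rw [← hl, h2]
      exact List.getD_eq_getElem _ _ hk
    have hcount : m + 1 ≤ l.countP (fun v => decide (ε < |v - μ|)) := by
      rcases lt_abs.mp hω with h | h
      · have := count_ge_of_sorted_hi l hsort m hk μ ε (by rw [hmed] at h; linarith)
        omega
      · have := count_ge_of_sorted_lo l hsort m hk μ ε (by rw [hmed] at h; linarith)
        omega
    have hsum : S ω = ((Finset.univ.filter (fun i => ε < |X i ω - μ|)).card : ℝ) := by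
      rw [hS, Finset.sum_apply]
      simp only [hY, hφ, Function.comp]
      exact Finset.sum_boole _ _
    have hcard : (Finset.univ.filter (fun i => ε < |X i ω - μ|)).card
        = l.countP (fun v => decide (ε < |v - μ|)) := by
      have hcoe : (l : Multiset ℝ) = Multiset.map (fun i => X i ω) Finset.univ.val := by
        rw [hl]; exact Multiset.sort_eq _ _
      calc (Finset.univ.filter (fun i => ε < |X i ω - μ|)).card
          = Multiset.card (Finset.univ.val.filter (fun i => ε < |X i ω - μ|)) := rfl
        _ = Multiset.countP (fun v => ε < |v - μ|)
              (Multiset.map (fun i => X i ω) Finset.univ.val) :=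
            (Multiset.countP_map (fun i => X i ω) Finset.univ.val
              (fun v => ε < |v - μ|)).symm
        _ = Multiset.countP (fun v => ε < |v - μ|) (l : Multiset ℝ) := by rw [hcoe]
        _ = l.countP (fun v => decide (ε < |v - μ|)) := Multiset.coe_countP _ _
    rw [hsum, hcard]
    have hn : (n:ℝ) = 2 * m + 1 := by exact_mod_cast congrArg Nat.cast hm
    have : ((m:ℝ) + 1) ≤ (l.countP (fun v => decide (ε < |v - μ|)) : ℝ) := by
      exact_mod_cast hcount
    rw [hn]; linarith
  refine (measure_mono hsub).trans ?_
  rw [← ENNReal.ofReal_toReal (measure_ne_top ℙ _)]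
  exact ENNReal.ofReal_le_ofReal hbound
end

section
/- For all real numbers x, y ∈ [0, 1], |arcsin x − arcsin y| ≤ (π/2)·√(|x² − y²|). -/
open Real

theorem arcsin_diff_le (x y : ℝ) (hx : x ∈ Set.Icc (0:ℝ) 1) (hy : y ∈ Set.Icc (0:ℝ) 1) :
    |Real.arcsin x - Real.arcsin y| ≤ (Real.pi / 2) * Real.sqrt |x ^ 2 - y ^ 2| := by
  wlog h : y ≤ x generalizing x y
  · rw [abs_sub_comm, abs_sub_comm (x ^ 2)]
    exact this y x hy hx (le_of_not_ge h)
  obtain ⟨hx0, hx1⟩ := hx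
  obtain ⟨hy0, hy1⟩ := hy
  have hmono : Real.arcsin y ≤ Real.arcsin x := Real.monotone_arcsin h
  set θ := Real.arcsin x - Real.arcsin y with hθ
  have hθ0 : 0 ≤ θ := by linarith
  have hθpi : θ ≤ π / 2 := by
    have h1 : Real.arcsin x ≤ π / 2 := Real.arcsin_le_pi_div_two x
    have h2 : 0 ≤ Real.arcsin y := Real.arcsin_nonneg.2 hy0
    linarith
  rw [abs_of_nonneg hθ0]
  have hsin : 2 / π * θ ≤ Real.sin θ := Real.mul_le_sin hθ0 hθpi
  have hπ : (0:ℝ) < π := Real.pi_pos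
  -- compute sin θ
  have hsineq : Real.sin θ = x * Real.sqrt (1 - y ^ 2) - y * Real.sqrt (1 - x ^ 2) := by
    rw [hθ, Real.sin_sub, Real.sin_arcsin (by linarith) hx1, Real.sin_arcsin (by linarith) hy1,
      Real.cos_arcsin, Real.cos_arcsin]
    ring
  -- bound sin θ by sqrt |x^2 - y^2|
  have habs : |x ^ 2 - y ^ 2| = x ^ 2 - y ^ 2 := abs_of_nonneg (by nlinarith)
  have hbound : Real.sin θ ≤ Real.sqrt |x ^ 2 - y ^ 2| := by
    rw [hsineq, habs]
    set a := x * Real.sqrt (1 - y ^ 2) with ha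
    set b := y * Real.sqrt (1 - x ^ 2) with hb
    have ha2 : a ^ 2 = x ^ 2 * (1 - y ^ 2) := by
      rw [ha, mul_pow, Real.sq_sqrt (by nlinarith)]
    have hb2 : b ^ 2 = y ^ 2 * (1 - x ^ 2) := by
      rw [hb, mul_pow, Real.sq_sqrt (by nlinarith)]
    have ha0 : 0 ≤ a := mul_nonneg hx0 (Real.sqrt_nonneg _)
    have hb0 : 0 ≤ b := mul_nonneg hy0 (Real.sqrt_nonneg _)
    have hab : b ≤ a := by nlinarith [sq_nonneg (a - b), sq_nonneg (a + b)]
    have hs0 : 0 ≤ Real.sqrt (x ^ 2 - y ^ 2) := Real.sqrt_nonneg _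
    have hs2 : (Real.sqrt (x ^ 2 - y ^ 2)) ^ 2 = x ^ 2 - y ^ 2 := Real.sq_sqrt (by nlinarith)
    nlinarith [sq_nonneg (a - b - Real.sqrt (x ^ 2 - y ^ 2))]
  calc θ ≤ π / 2 * Real.sin θ := by
        have := hsin
        rw [div_mul_eq_mul_div, div_le_iff₀ hπ] at this
        nlinarith
    _ ≤ π / 2 * Real.sqrt |x ^ 2 - y ^ 2| := by
        apply mul_le_mul_of_nonneg_left hbound (by positivity)
end

section
/- Let f(p, q) = (p − q)/(p + q) for reals p, q. Suppose 0 ≤ p ≤ 1, 0 ≤ q ≤ 1, p + q > 0, and let p̃, q̃ ≥ 0 satisfy |p − p̃| ≤ η(p + q) and |q − q̃| ≤ η(p + q) for some η with 0 ≤ η ≤ 1/5. Then |f(p, q) − f(p̃, q̃)| ≤ 5η. -/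
theorem ratio_stability (p q ptilde qtilde η : ℝ)
    (hp0 : 0 ≤ p) (hp1 : p ≤ 1) (hq0 : 0 ≤ q) (hq1 : q ≤ 1) (hpq : 0 < p + q)
    (hpt : 0 ≤ ptilde) (hqt : 0 ≤ qtilde)
    (hη0 : 0 ≤ η) (hη : η ≤ 1 / 5)
    (hpertp : |p - ptilde| ≤ η * (p + q)) (hpertq : |q - qtilde| ≤ η * (p + q)) :
    |(p - q) / (p + q) - (ptilde - qtilde) / (ptilde + qtilde)| ≤ 5 * η := by
  have hp' := abs_le.mp hpertp
  have hq' := abs_le.mp hpertq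
  have hst : 0 < ptilde + qtilde := by nlinarith [hp'.2, hq'.2]
  have key : (p - q) / (p + q) - (ptilde - qtilde) / (ptilde + qtilde)
      = (2 * (p * qtilde - q * ptilde)) / ((p + q) * (ptilde + qtilde)) := by
    field_simp
    ring
  rw [key, abs_div, abs_of_pos (by positivity : (0:ℝ) < (p + q) * (ptilde + qtilde)),
    div_le_iff₀ (by positivity)]
  have hnum : |2 * (p * qtilde - q * ptilde)| ≤ 2 * η * (p + q) ^ 2 := by
    have h1 : |p * (qtilde - q)| ≤ p * (η * (p + q)) := by
      rw [abs_mul, abs_of_nonneg hp0, abs_sub_comm]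
      exact mul_le_mul_of_nonneg_left hpertq hp0
    have h2 : |q * (ptilde - p)| ≤ q * (η * (p + q)) := by
      rw [abs_mul, abs_of_nonneg hq0, abs_sub_comm]
      exact mul_le_mul_of_nonneg_left hpertp hq0
    calc |2 * (p * qtilde - q * ptilde)|
        = 2 * |p * (qtilde - q) + q * (p - ptilde)| := by rw [abs_mul]; norm_num; ring_nf
      _ ≤ 2 * (|p * (qtilde - q)| + |q * (p - ptilde)|) := by
          have := abs_add_le (p * (qtilde - q)) (q * (p - ptilde))
          linarith
      _ ≤ 2 * η * (p + q) ^ 2 := by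
          have h2' : |q * (p - ptilde)| ≤ q * (η * (p + q)) := by
            rw [abs_mul, abs_of_nonneg hq0]
            exact mul_le_mul_of_nonneg_left hpertp hq0
          nlinarith
  have hst2 : (1 - 2*η) * (p + q) ≤ ptilde + qtilde := by nlinarith [hp'.1, hq'.1]
  calc |2 * (p * qtilde - q * ptilde)| ≤ 2 * η * (p + q) ^ 2 := hnum
    _ ≤ 5 * η * ((p + q) * (ptilde + qtilde)) := by
        nlinarith [mul_le_mul_of_nonneg_left hst2 (mul_nonneg hη0 hpq.le),
          mul_nonneg (mul_nonneg hη0 hη0) (sq_nonneg (p + q)),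
          mul_nonneg hη0 (sq_nonneg (p + q))]
end

section
/- Let Ω be a finite nonempty set and let ν, π be probability distributions on Ω (nonnegative functions summing to 1) with π(x) > 0 for all x ∈ Ω. Then Σ_{x∈Ω} √(ν(x)·π(x)) ≥ 1/√(χ²(ν, π) + 1); equivalently, (Σ_{x∈Ω} √(ν(x)π(x)))² · (Σ_{x∈Ω} ν(x)²/π(x)) ≥ 1. -/
theorem overlap_ge_inv_sqrt_chi_squared {Ω : Type*} [Fintype Ω] [Nonempty Ω]
    (ν π : Ω → ℝ) (hν0 : ∀ x, 0 ≤ ν x) (hπ0 : ∀ x, 0 < π x)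
    (hνsum : ∑ x : Ω, ν x = 1) (hπsum : ∑ x : Ω, π x = 1) :
    1 / Real.sqrt ((∑ x : Ω, (ν x) ^ 2 / π x - 1) + 1) ≤
        ∑ x : Ω, Real.sqrt (ν x * π x) ∧
      1 ≤ (∑ x : Ω, Real.sqrt (ν x * π x)) ^ 2 * (∑ x : Ω, (ν x) ^ 2 / π x) := by
  set S := ∑ x : Ω, Real.sqrt (ν x * π x) with hS
  set C := ∑ x : Ω, (ν x) ^ 2 / π x with hC
  set T := ∑ x : Ω, Real.sqrt (ν x ^ 3 / π x) with hT
  have hS0 : 0 ≤ S := Finset.sum_nonneg fun x _ => Real.sqrt_nonneg _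
  have hT0 : 0 ≤ T := Finset.sum_nonneg fun x _ => Real.sqrt_nonneg _
  have hC0 : 0 ≤ C := Finset.sum_nonneg fun x _ =>
    div_nonneg (sq_nonneg _) (hπ0 x).le
  -- Cauchy 1 : 1 ≤ S * T
  have h1 : 1 ≤ S * T := by
    have := Finset.sum_mul_sq_le_sq_mul_sq Finset.univ
      (fun x => Real.sqrt (Real.sqrt (ν x * π x)))
      (fun x => Real.sqrt (Real.sqrt (ν x ^ 3 / π x)))
    have key : ∀ x : Ω, Real.sqrt (Real.sqrt (ν x * π x)) *
        Real.sqrt (Real.sqrt (ν x ^ 3 / π x)) = ν x := by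
      intro x
      rw [← Real.sqrt_mul (Real.sqrt_nonneg _),
        ← Real.sqrt_mul (mul_nonneg (hν0 x) (hπ0 x).le)]
      have : ν x * π x * (ν x ^ 3 / π x) = (ν x ^ 2) ^ 2 := by
        have := (hπ0 x).ne'
        field_simp
      rw [this, Real.sqrt_sq (sq_nonneg _), Real.sqrt_sq (hν0 x)]
    simp only [key, Real.sq_sqrt (Real.sqrt_nonneg _)] at this
    calc (1:ℝ) = (∑ x : Ω, ν x) ^ 2 := by rw [hνsum]; norm_num
      _ ≤ S * T := this
  -- Cauchy 2 : T^2 ≤ C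
  have h2 : T ^ 2 ≤ C := by
    have := Finset.sum_mul_sq_le_sq_mul_sq Finset.univ
      (fun x => Real.sqrt (ν x)) (fun x => Real.sqrt (ν x ^ 2 / π x))
    have key : ∀ x : Ω, Real.sqrt (ν x) * Real.sqrt (ν x ^ 2 / π x)
        = Real.sqrt (ν x ^ 3 / π x) := by
      intro x
      rw [← Real.sqrt_mul (hν0 x)]
      congr 1
      have := (hπ0 x).ne'
      field_simp
    have key2 : ∀ x : Ω, Real.sqrt (ν x ^ 2 / π x) ^ 2 = ν x ^ 2 / π x := by
      intro x; exact Real.sq_sqrt (div_nonneg (sq_nonneg _) (hπ0 x).le)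
    simp only [key, Real.sq_sqrt (hν0 _), key2] at this
    calc T ^ 2 ≤ (∑ x : Ω, ν x) * C := this
      _ = C := by rw [hνsum, one_mul]
  have hmain : 1 ≤ S ^ 2 * C := by
    calc (1:ℝ) ≤ (S * T) ^ 2 := by nlinarith
      _ = S ^ 2 * T ^ 2 := by ring
      _ ≤ S ^ 2 * C := by nlinarith [sq_nonneg S]
  refine ⟨?_, hmain⟩
  have hCpos : 0 < C := by nlinarith [sq_nonneg S]
  have : C - 1 + 1 = C := by ring
  rw [this]
  rw [div_le_iff₀ (Real.sqrt_pos.mpr hCpos)]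
  have hTC : T ≤ Real.sqrt C := (Real.le_sqrt hT0 hC0).mpr h2
  nlinarith [mul_le_mul_of_nonneg_left hTC hS0]
end

section
/- Let Ω be a finite nonempty set and H : Ω → ℝ. For β ∈ ℝ, the partition function is Z(β) = Σ_{x∈Ω} exp(−β·H(x)) (note Z(β) > 0), and the Gibbs distribution π_β on Ω is defined by π_β(x) = exp(−β·H(x))/Z(β). Suppose β, β′ ∈ ℝ and B ≥ 1 satisfy the Chebyshev cooling schedule condition Z(2β′ − β)·Z(β)/Z(β′)² ≤ B. Then (Σ_{x∈Ω} √(π_β(x)·π_{β′}(x)))² ≥ 1/B. -/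
open Finset

lemma cs_exp_aux {Ω : Type*} [Fintype Ω] (H : Ω → ℝ) (a b c : ℝ) (hc : a + b = 2 * c) :
    (∑ x : Ω, Real.exp (-c * H x)) ^ 2 ≤
      (∑ x : Ω, Real.exp (-a * H x)) * (∑ x : Ω, Real.exp (-b * H x)) := by
  have hc' : c = (a + b) / 2 := by linarith
  subst hc'
  have h := Finset.sum_mul_sq_le_sq_mul_sq Finset.univ
    (fun x : Ω => Real.exp (-(a / 2) * H x)) (fun x : Ω => Real.exp (-(b / 2) * H x))
  calc (∑ x : Ω, Real.exp (-((a + b) / 2) * H x)) ^ 2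
      = (∑ x : Ω, Real.exp (-(a / 2) * H x) * Real.exp (-(b / 2) * H x)) ^ 2 := by
        congr 1
        refine Finset.sum_congr rfl fun x _ => ?_
        rw [← Real.exp_add]
        ring_nf
    _ ≤ (∑ x : Ω, Real.exp (-(a / 2) * H x) ^ 2) * ∑ x : Ω, Real.exp (-(b / 2) * H x) ^ 2 := h
    _ = (∑ x : Ω, Real.exp (-a * H x)) * (∑ x : Ω, Real.exp (-b * H x)) := by
        congr 1 <;> refine Finset.sum_congr rfl fun x _ => ?_ <;>
          rw [sq, ← Real.exp_add] <;> ring_nf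

theorem gibbs_overlap_of_chebyshev {Ω : Type*} [Fintype Ω] [Nonempty Ω]
    (H : Ω → ℝ) (β β' B : ℝ) (hB : 1 ≤ B)
    (hcheb : (∑ x : Ω, Real.exp (-(2 * β' - β) * H x)) * (∑ x : Ω, Real.exp (-β * H x)) /
        (∑ x : Ω, Real.exp (-β' * H x)) ^ 2 ≤ B) :
    1 / B ≤ (∑ x : Ω, Real.sqrt ((Real.exp (-β * H x) / ∑ y : Ω, Real.exp (-β * H y)) *
        (Real.exp (-β' * H x) / ∑ y : Ω, Real.exp (-β' * H y)))) ^ 2 := by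
  set Z : ℝ → ℝ := fun a => ∑ x : Ω, Real.exp (-a * H x) with hZ
  have hZpos : ∀ a : ℝ, 0 < Z a := fun a =>
    Finset.sum_pos (fun x _ => Real.exp_pos _) Finset.univ_nonempty
  -- rewrite the overlap sum
  have hsum : (∑ x : Ω, Real.sqrt ((Real.exp (-β * H x) / Z β) *
      (Real.exp (-β' * H x) / Z β'))) = Z ((β + β') / 2) / Real.sqrt (Z β * Z β') := by
    rw [hZ]
    simp only
    rw [Finset.sum_div]
    refine Finset.sum_congr rfl fun x _ => ?_
    rw [div_mul_div_comm, Real.sqrt_div' _ ?_, ← Real.exp_add]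
    · congr 1
      rw [← Real.exp_half]
      congr 1
      ring
    · positivity
  rw [hsum, div_pow, Real.sq_sqrt (by positivity)]
  have h1 : Z β' ^ 2 ≤ Z ((β + β') / 2) * Z ((3 * β' - β) / 2) :=
    cs_exp_aux H _ _ _ (by ring)
  have h2 : Z ((3 * β' - β) / 2) ^ 2 ≤ Z β' * Z (2 * β' - β) :=
    cs_exp_aux H _ _ _ (by ring)
  have h3 : Z β' ^ 3 ≤ Z ((β + β') / 2) ^ 2 * Z (2 * β' - β) := by
    nlinarith [mul_le_mul h1 h1 (sq_nonneg (Z β'))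
        (by positivity : (0:ℝ) ≤ Z ((β + β') / 2) * Z ((3 * β' - β) / 2)),
      mul_le_mul_of_nonneg_left h2
        (by positivity : (0:ℝ) ≤ Z ((β + β') / 2) ^ 2),
      hZpos β', hZpos ((β + β') / 2), hZpos (2 * β' - β)]
  have hcheb' : Z (2 * β' - β) * Z β ≤ B * Z β' ^ 2 := by
    rwa [div_le_iff₀ (by positivity)] at hcheb
  rw [div_le_div_iff₀ (by linarith : (0:ℝ) < B) (by positivity), one_mul]
  have key : Z β' ^ 2 * (Z β * Z β') ≤ Z β' ^ 2 * (Z ((β + β') / 2) ^ 2 * B) := by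
    nlinarith [mul_le_mul_of_nonneg_right h3 (hZpos β).le,
      mul_le_mul_of_nonneg_left hcheb'
        (by positivity : (0:ℝ) ≤ Z ((β + β') / 2) ^ 2)]
  exact (mul_le_mul_iff_of_pos_left (pow_pos (hZpos β') 2)).mp key
end

section
/- Let B ≥ 1, ℓ ≥ 1 be given, let 0 < ε ≤ 1, and set m = ⌈16Bℓ/ε²⌉. Let (Y_{i,j}) for i ∈ {0, …, ℓ−1}, j ∈ {1, …, m} be mutually independent nonnegative square-integrable random variables on a probability space such that for each i, all Y_{i,j} (j = 1, …, m) have the same mean μ_i > 0 and satisfy E[Y_{i,j}²] ≤ B·μ_i². Define α̃_i = (1/m)·Σ_{j=1}^m Y_{i,j}, Ỹ = α̃_0·α̃_1⋯α̃_{ℓ−1}, and Ȳ = μ_0·μ_1⋯μ_{ℓ−1}. Then Pr[(1 − ε)Ȳ ≤ Ỹ ≤ (1 + ε)Ȳ] ≥ 3/4. -/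
set_option maxHeartbeats 1000000

open MeasureTheory ProbabilityTheory Finset

lemma df_pow_le (x : ℝ) (hx : 0 ≤ x) : ∀ n : ℕ, (n : ℝ) * x ≤ 1/2 → (1+x)^n ≤ 1 + 2*n*x := by
  intro n
  induction n with
  | zero => simp
  | succ k ih =>
    intro h
    have hk : (k : ℝ) * x ≤ 1/2 := by
      have : (k : ℝ) ≤ (k+1 : ℕ) := by push_cast; linarith
      nlinarith [Nat.cast_nonneg (α := ℝ) k]
    have h1 := ih hk
    have h2 : (0:ℝ) ≤ (1+x)^k := by positivity
    push_cast
    calc (1+x)^(k+1) = (1+x)^k * (1+x) := by ring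
    _ ≤ (1 + 2*k*x) * (1+x) := by nlinarith
    _ ≤ 1 + 2*(k+1)*x := by push_cast at h hk ⊢; nlinarith [Nat.cast_nonneg (α := ℝ) k]

/-- independence of functions of disjoint blocks -/
lemma df_block_indep {Ω : Type*} [MeasureSpace Ω] [IsProbabilityMeasure (ℙ : Measure Ω)]
    {l m : ℕ} (Y : Fin l × Fin m → Ω → ℝ) (hYmeas : ∀ p, Measurable (Y p))
    (hindep : iIndepFun Y ℙ)
    (g : ℝ → ℝ) (hg : Measurable g) (s : Finset (Fin l)) (k : Fin l) (hk : k ∉ s) :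
    IndepFun (fun ω => ∏ i ∈ s, g ((1 / (m : ℝ)) * ∑ j, Y (i, j) ω))
      (fun ω => g ((1 / (m : ℝ)) * ∑ j, Y (k, j) ω)) ℙ := by
  classical
  set A : Finset (Fin l × Fin m) := s ×ˢ Finset.univ with hA
  set Bs : Finset (Fin l × Fin m) := {k} ×ˢ Finset.univ with hB
  have hdisj : Disjoint A Bs := by
    rw [Finset.disjoint_left]
    rintro ⟨i, j⟩ hiA hiB
    simp only [hA, hB, Finset.mem_product, Finset.mem_singleton] at hiA hiB
    exact hk (hiB.1 ▸ hiA.1)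
  have base := hindep.indepFun_finset A Bs hdisj hYmeas
  let F : ((p : A) → ℝ) → ℝ := fun v =>
    ∏ i ∈ s.attach, g ((1 / (m : ℝ)) * ∑ j, v ⟨(i.1, j), by
      simp [hA, Finset.mem_product, i.2]⟩)
  let G : ((p : Bs) → ℝ) → ℝ := fun v =>
    g ((1 / (m : ℝ)) * ∑ j, v ⟨(k, j), by simp [hB, Finset.mem_product]⟩)
  have hF : Measurable F := by
    apply Finset.measurable_prod
    intro i _
    exact hg.comp (measurable_const.mul (Finset.measurable_sum _ fun j _ =>
      measurable_pi_apply _))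
  have hG : Measurable G :=
    hg.comp (measurable_const.mul (Finset.measurable_sum _ fun j _ => measurable_pi_apply _))
  have := (base.comp hF hG)
  have e1 : (F ∘ fun ω (p : A) => Y p ω) = fun ω => ∏ i ∈ s, g ((1 / (m : ℝ)) * ∑ j, Y (i, j) ω) := by
    funext ω
    simp only [Function.comp_apply, F]
    rw [← Finset.prod_attach s (fun i => g ((1 / (m : ℝ)) * ∑ j, Y (i, j) ω))]
  have e2 : (G ∘ fun ω (p : Bs) => Y p ω) = fun ω => g ((1 / (m : ℝ)) * ∑ j, Y (k, j) ω) := rfl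
  rwa [e1, e2] at this

lemma df_prod_integral {Ω : Type*} [MeasureSpace Ω] [IsProbabilityMeasure (ℙ : Measure Ω)]
    {l m : ℕ} (Y : Fin l × Fin m → Ω → ℝ) (hYmeas : ∀ p, Measurable (Y p))
    (hindep : iIndepFun Y ℙ)
    (g : ℝ → ℝ) (hg : Measurable g)
    (hint : ∀ i, Integrable (fun ω => g ((1 / (m : ℝ)) * ∑ j, Y (i, j) ω)) ℙ)
    (s : Finset (Fin l)) :
    Integrable (fun ω => ∏ i ∈ s, g ((1 / (m : ℝ)) * ∑ j, Y (i, j) ω)) ℙ ∧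
    ∫ ω, ∏ i ∈ s, g ((1 / (m : ℝ)) * ∑ j, Y (i, j) ω) =
      ∏ i ∈ s, ∫ ω, g ((1 / (m : ℝ)) * ∑ j, Y (i, j) ω) := by
  classical
  induction s using Finset.induction_on with
  | empty => simp
  | @insert k s hk ih =>
    have hind := (df_block_indep Y hYmeas hindep g hg s k hk).symm
    have hmeask : AEStronglyMeasurable (fun ω => g ((1 / (m : ℝ)) * ∑ j, Y (k, j) ω)) ℙ :=
      (hg.comp (measurable_const.mul (Finset.measurable_sum _ fun j _ =>
        hYmeas (k, j)))).aestronglyMeasurable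
    have hmeass : AEStronglyMeasurable
        (fun ω => ∏ i ∈ s, g ((1 / (m : ℝ)) * ∑ j, Y (i, j) ω)) ℙ := by
      apply Measurable.aestronglyMeasurable
      apply Finset.measurable_prod
      intro i _
      exact hg.comp (measurable_const.mul (Finset.measurable_sum _ fun j _ => hYmeas (i, j)))
    constructor
    · have := hind.integrable_mul (hint k) ih.1
      simpa [Finset.prod_insert hk, Pi.mul_def] using this
    · have := hind.integral_mul_eq_mul_integral hmeask hmeass
      simp only [Finset.prod_insert hk]
      calc ∫ ω, g ((1 / (m : ℝ)) * ∑ j, Y (k, j) ω) *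
            ∏ i ∈ s, g ((1 / (m : ℝ)) * ∑ j, Y (i, j) ω)
          = (∫ ω, g ((1 / (m : ℝ)) * ∑ j, Y (k, j) ω)) *
            ∫ ω, ∏ i ∈ s, g ((1 / (m : ℝ)) * ∑ j, Y (i, j) ω) := this
        _ = _ := by rw [ih.2]

theorem dyer_frieze_product_estimator {Ω : Type*} [MeasureSpace Ω]
    [IsProbabilityMeasure (ℙ : Measure Ω)]
    (B : ℝ) (hB : 1 ≤ B) (l : ℕ) (hl : 1 ≤ l) (ε : ℝ) (hε0 : 0 < ε) (hε1 : ε ≤ 1)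
    (m : ℕ) (hm : m = ⌈16 * B * l / ε ^ 2⌉₊)
    (Y : Fin l × Fin m → Ω → ℝ)
    (hYmeas : ∀ p, Measurable (Y p))
    (hindep : iIndepFun Y ℙ)
    (hYnn : ∀ p ω, 0 ≤ Y p ω)
    (hY2 : ∀ p, MemLp (Y p) 2 ℙ)
    (μ : Fin l → ℝ) (hμpos : ∀ i, 0 < μ i)
    (hmean : ∀ i j, ∫ ω, Y (i, j) ω = μ i)
    (hsecond : ∀ i j, ∫ ω, (Y (i, j) ω) ^ 2 ≤ B * μ i ^ 2) :
    ENNReal.ofReal (3 / 4) ≤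
      (ℙ : Measure Ω) {ω |
        (1 - ε) * ∏ i, μ i ≤ ∏ i, ((1 / (m : ℝ)) * ∑ j, Y (i, j) ω) ∧
        ∏ i, ((1 / (m : ℝ)) * ∑ j, Y (i, j) ω) ≤ (1 + ε) * ∏ i, μ i} := by
  classical
  have hl0 : (0:ℝ) < l := by exact_mod_cast hl
  have hB0 : (0:ℝ) < B := by linarith
  have hmposR : (0:ℝ) < 16 * B * l / ε ^ 2 := by positivity
  have hm0 : 0 < m := by
    rw [hm]; exact Nat.ceil_pos.mpr hmposR
  have hmR : (16 * B * l / ε ^ 2 : ℝ) ≤ m := by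
    rw [hm]; exact Nat.le_ceil _
  have hmR0 : (0:ℝ) < m := by exact_mod_cast hm0
  have hYint : ∀ p, Integrable (Y p) ℙ := fun p => (hY2 p).integrable one_le_two
  set S : Fin l → Ω → ℝ := fun i ω => (1 / (m : ℝ)) * ∑ j, Y (i, j) ω with hS
  have hSmeas : ∀ i, Measurable (S i) := fun i =>
    measurable_const.mul (Finset.measurable_sum _ fun j _ => hYmeas (i, j))
  have hSfun : ∀ i, S i = (1 / (m : ℝ)) • (∑ j, Y (i, j)) := by
    intro i; funext ω; simp [hS, Finset.sum_apply]
  have hSmem : ∀ i, MemLp (S i) 2 ℙ := by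
    intro i
    rw [hSfun]
    exact (memLp_finset_sum' _ fun j _ => hY2 (i, j)).const_smul _
  have hSmean : ∀ i, ∫ ω, S i ω = μ i := by
    intro i
    simp only [hS]
    rw [integral_const_mul, integral_finset_sum _ fun j _ => hYint (i, j)]
    simp only [hmean, Finset.sum_const, Finset.card_univ, Fintype.card_fin, nsmul_eq_mul]
    field_simp
  have hvarY : ∀ p, variance (Y p) ℙ ≤ (B - 1) * μ p.1 ^ 2 := by
    rintro ⟨i, j⟩
    rw [variance_eq_sub (hY2 (i, j))]
    simp only [Pi.pow_apply]
    rw [hmean i j]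
    linarith [hsecond i j]
  have hvarS : ∀ i, variance (S i) ℙ ≤ (B - 1) / m * μ i ^ 2 := by
    intro i
    rw [hSfun, variance_smul]
    have hsum : variance (∑ j, Y (i, j)) ℙ = ∑ j, variance (Y (i, j)) ℙ := by
      apply IndepFun.variance_sum (fun j _ => hY2 (i, j))
      intro j _ j' _ hjj'
      exact hindep.indepFun (by simp [Prod.ext_iff, hjj'])
    have hb : ∑ j : Fin m, variance (Y (i, j)) ℙ ≤ m * ((B - 1) * μ i ^ 2) := by
      calc ∑ j : Fin m, variance (Y (i, j)) ℙ ≤ ∑ _j : Fin m, (B - 1) * μ i ^ 2 :=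
            Finset.sum_le_sum fun j _ => hvarY (i, j)
        _ = m * ((B - 1) * μ i ^ 2) := by
            simp [Finset.sum_const, Finset.card_univ, Fintype.card_fin]
    have h0 : (0:ℝ) ≤ (1 / (m:ℝ)) ^ 2 := by positivity
    calc (1 / (m:ℝ)) ^ 2 * variance (∑ j, Y (i, j)) ℙ
        ≤ (1 / (m:ℝ)) ^ 2 * (m * ((B - 1) * μ i ^ 2)) := by
          rw [hsum]; exact mul_le_mul_of_nonneg_left hb h0
      _ = (B - 1) / m * μ i ^ 2 := by field_simp
  have hS2 : ∀ i, ∫ ω, S i ω ^ 2 ≤ (1 + (B - 1) / m) * μ i ^ 2 := by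
    intro i
    have hv := variance_eq_sub (hSmem i)
    have : ∫ ω, S i ω ^ 2 = variance (S i) ℙ + μ i ^ 2 := by
      simp only [Pi.pow_apply] at hv
      rw [hv, hSmean i]; ring
    rw [this]
    have := hvarS i
    nlinarith [sq_nonneg (μ i)]
  -- product integrals
  have hint_id : ∀ i, Integrable (fun ω => (1 / (m:ℝ)) * ∑ j, Y (i, j) ω) ℙ :=
    fun i => (hSmem i).integrable one_le_two
  have hint_sq : ∀ i, Integrable (fun ω => ((1 / (m:ℝ)) * ∑ j, Y (i, j) ω) ^ 2) ℙ :=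
    fun i => (hSmem i).integrable_sq
  have hid := df_prod_integral Y hYmeas hindep (fun x => x) measurable_id hint_id Finset.univ
  have hsq := df_prod_integral Y hYmeas hindep (fun x => x ^ 2)
    (measurable_id.pow_const 2) hint_sq Finset.univ
  set T : Ω → ℝ := fun ω => ∏ i, S i ω with hT
  have hTmeas : Measurable T := Finset.measurable_prod _ fun i _ => hSmeas i
  set P : ℝ := ∏ i, μ i with hPdef
  have hP0 : 0 < P := Finset.prod_pos fun i _ => hμpos i
  have ET : ∫ ω, T ω = P := by
    have := hid.2
    rw [hT, hPdef]
    simp only [hS]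
    rw [this]
    exact Finset.prod_congr rfl fun i _ => hSmean i
  have hprodpow : ∀ ω, ∏ i, ((1 / (m:ℝ)) * ∑ j, Y (i, j) ω) ^ 2 = T ω ^ 2 := by
    intro ω; rw [Finset.prod_pow]
  have hTsq_int : Integrable (fun ω => T ω ^ 2) ℙ := by
    have := hsq.1
    exact this.congr (Filter.Eventually.of_forall fun ω => hprodpow ω)
  have hTmem : MemLp T 2 ℙ := (memLp_two_iff_integrable_sq hTmeas.aestronglyMeasurable).2 hTsq_int
  have ET2 : ∫ ω, T ω ^ 2 = ∏ i, ∫ ω, S i ω ^ 2 := by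
    have := hsq.2
    calc ∫ ω, T ω ^ 2 = ∫ ω, ∏ i, ((1 / (m:ℝ)) * ∑ j, Y (i, j) ω) ^ 2 := by
          exact integral_congr_ae (Filter.Eventually.of_forall fun ω => (hprodpow ω).symm)
      _ = ∏ i, ∫ ω, S i ω ^ 2 := this
  -- numeric variance bound
  set x : ℝ := (B - 1) / m with hxdef
  have hx0 : 0 ≤ x := div_nonneg (by linarith) hmR0.le
  have hlx : (l:ℝ) * x ≤ ε ^ 2 / 16 := by
    have key : 16 * B * l ≤ (m:ℝ) * ε ^ 2 := by
      rw [div_le_iff₀ (by positivity : (0:ℝ) < ε ^ 2)] at hmR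
      linarith
    rw [hxdef, show (l:ℝ) * ((B - 1) / ↑m) = (l * (B - 1)) / ↑m from by ring,
      div_le_div_iff₀ hmR0 (by norm_num : (0:ℝ) < 16)]
    nlinarith
  have hlx2 : (l:ℝ) * x ≤ 1 / 2 := by nlinarith
  have hpow : (1 + x) ^ l ≤ 1 + ε ^ 2 / 8 := by
    have := df_pow_le x hx0 l hlx2
    nlinarith
  have hvarT : variance T ℙ ≤ ε ^ 2 / 8 * P ^ 2 := by
    have hv := variance_eq_sub hTmem
    simp only [Pi.pow_apply] at hv
    have hle : ∫ ω, T ω ^ 2 ≤ (1 + x) ^ l * P ^ 2 := by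
      rw [ET2]
      calc ∏ i, ∫ ω, S i ω ^ 2 ≤ ∏ i, ((1 + x) * μ i ^ 2) := by
            apply Finset.prod_le_prod
            · exact fun i _ => integral_nonneg fun ω => sq_nonneg _
            · exact fun i _ => hS2 i
        _ = (1 + x) ^ l * P ^ 2 := by
            rw [Finset.prod_mul_distrib, Finset.prod_const, Finset.card_univ,
              Fintype.card_fin, Finset.prod_pow, ← hPdef]
    rw [hv, ET]
    nlinarith [hP0, sq_nonneg P]
  -- Chebyshev
  have hceb := meas_ge_le_variance_div_sq (μ := ℙ) hTmem
    (c := ε * P) (by positivity)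
  rw [ET] at hceb
  have hq : variance T ℙ / (ε * P) ^ 2 ≤ 1/4 := by
    rw [div_le_iff₀ (by positivity : (0:ℝ) < (ε * P) ^ 2)]
    have h2 : (ε * P) ^ 2 = ε ^ 2 * P ^ 2 := by ring
    have hnn : (0:ℝ) ≤ ε ^ 2 * P ^ 2 := by positivity
    rw [h2]
    nlinarith [hvarT, hnn]
  have hbad : ℙ {ω | ε * P ≤ |T ω - P|} ≤ ENNReal.ofReal (1/4) :=
    le_trans hceb (ENNReal.ofReal_le_ofReal hq)
  have hTval : ∀ ω, ∏ i, ((1 / (m : ℝ)) * ∑ j, Y (i, j) ω) = T ω := fun ω => by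
    simp only [hT, hS]
  simp only [hTval]
  set E := {ω | (1 - ε) * P ≤ T ω ∧ T ω ≤ (1 + ε) * P} with hE
  have hEmeas : MeasurableSet E := by
    rw [hE, Set.setOf_and]
    exact (measurableSet_le measurable_const hTmeas).inter
      (measurableSet_le hTmeas measurable_const)
  have hsub : Eᶜ ⊆ {ω | ε * P ≤ |T ω - P|} := by
    intro ω hω
    simp only [hE, Set.mem_compl_iff, Set.mem_setOf_eq, not_and_or, not_le] at hω
    simp only [Set.mem_setOf_eq]
    rcases hω with h | h
    · exact le_abs.mpr (Or.inr (by linarith))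
    · exact le_abs.mpr (Or.inl (by linarith))
  have hcompl : ℙ Eᶜ ≤ ENNReal.ofReal (1/4) := le_trans (measure_mono hsub) hbad
  have hsum := measure_add_measure_compl (μ := ℙ) hEmeas
  have h1 : (1 : ENNReal) ≤ ℙ E + ENNReal.ofReal (1/4) := by
    have huniv : ℙ E + ℙ Eᶜ = 1 := by rw [hsum, measure_univ]
    rw [← huniv]; exact add_le_add (le_refl _) hcompl
  have h34 : ENNReal.ofReal (3/4) + ENNReal.ofReal (1/4) = 1 := by
    rw [← ENNReal.ofReal_add (by norm_num) (by norm_num)]; norm_num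
  exact (ENNReal.add_le_add_iff_right ENNReal.ofReal_ne_top).1 (h34 ▸ h1)
end

section
/- For every integer t ≥ 1 and every real Δ with 0 < Δ < 1, it holds that 1 − sin²(π t Δ)/(t²·sin²(π Δ)) ≤ (π t Δ)²/3. -/
open Real

lemma sin_ge_sub_cube' (x : ℝ) (hx : 0 ≤ x) : x - x ^ 3 / 6 ≤ Real.sin x := by
  have key : ∀ y ∈ Set.Ici (0:ℝ), 0 ≤ Real.sin y - (y - y ^ 3 / 6) := by
    have hmono : MonotoneOn (fun y : ℝ => Real.sin y - (y - y ^ 3 / 6)) (Set.Ici 0) := by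
      apply monotoneOn_of_deriv_nonneg (convex_Ici 0)
      · exact ((Real.continuous_sin.sub (continuous_id.sub
          ((continuous_pow 3).div_const 6))).continuousOn)
      · intro y hy
        apply DifferentiableAt.differentiableWithinAt
        fun_prop
      · intro y hy
        have : deriv (fun y : ℝ => Real.sin y - (y - y ^ 3 / 6)) y
            = Real.cos y - (1 - 3 * y ^ 2 / 6) := by
          have h1 : HasDerivAt (fun y : ℝ => Real.sin y - (y - y ^ 3 / 6))
              (Real.cos y - (1 - 3 * y ^ (3-1) / 6)) y := by
            exact (Real.hasDerivAt_sin y).sub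
              ((hasDerivAt_id y).sub ((hasDerivAt_pow 3 y).div_const 6))
          simpa using h1.deriv
        rw [this]
        have := Real.one_sub_sq_div_two_le_cos (x := y)
        nlinarith [sq_nonneg y]
    intro y hy
    have h0 : (0:ℝ) ∈ Set.Ici (0:ℝ) := Set.self_mem_Ici
    have := hmono h0 hy (by exact hy)
    simpa using this
  have := key x hx
  linarith

theorem dirichlet_kernel_bound (t : ℕ) (ht : 1 ≤ t) (Δ : ℝ) (hΔ0 : 0 < Δ) (hΔ1 : Δ < 1) :
    1 - Real.sin (Real.pi * t * Δ) ^ 2 / ((t : ℝ) ^ 2 * Real.sin (Real.pi * Δ) ^ 2) ≤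
      (Real.pi * t * Δ) ^ 2 / 3 := by
  have ht' : (1:ℝ) ≤ (t:ℝ) := by exact_mod_cast ht
  have ht0 : (0:ℝ) < t := by linarith
  set a := Real.pi * t * Δ with ha
  set θ := Real.pi * Δ with hθ
  have hθ0 : 0 < θ := mul_pos Real.pi_pos hΔ0
  have hθπ : θ < Real.pi := by
    have := Real.pi_pos
    calc θ = Real.pi * Δ := rfl
    _ < Real.pi * 1 := by nlinarith
    _ = Real.pi := mul_one _
  have hu : 0 < Real.sin θ := Real.sin_pos_of_pos_of_lt_pi hθ0 hθπ
  have ha0 : 0 < a := by positivity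
  have haθ : a = t * θ := by ring
  have hden : 0 < (t : ℝ) ^ 2 * Real.sin θ ^ 2 := by positivity
  rcases le_or_gt 3 (a ^ 2) with h3 | h3
  · have h1 : 1 ≤ a ^ 2 / 3 := by linarith
    have h2 : 0 ≤ Real.sin a ^ 2 / ((t : ℝ) ^ 2 * Real.sin θ ^ 2) := by positivity
    linarith
  · -- small case
    have hsin : a - a ^ 3 / 6 ≤ Real.sin a := sin_ge_sub_cube' a ha0.le
    have hnum0 : 0 ≤ a - a ^ 3 / 6 := by nlinarith
    have hs2 : (a - a ^ 3 / 6) ^ 2 ≤ Real.sin a ^ 2 := by nlinarith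
    have huθ : Real.sin θ ≤ θ := by
      have := Real.sin_lt hθ0
      linarith
    have hden_le : (t : ℝ) ^ 2 * Real.sin θ ^ 2 ≤ a ^ 2 := by
      rw [haθ, mul_pow]
      have : Real.sin θ ^ 2 ≤ θ ^ 2 := by nlinarith
      nlinarith
    rw [sub_le_iff_le_add, ← sub_le_iff_le_add']
    rw [le_div_iff₀ hden]
    have h13 : 0 ≤ 1 - a ^ 2 / 3 := by linarith
    calc (1 - a ^ 2 / 3) * ((t : ℝ) ^ 2 * Real.sin θ ^ 2)
        ≤ (1 - a ^ 2 / 3) * a ^ 2 := by nlinarith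
      _ ≤ (a - a ^ 3 / 6) ^ 2 := by nlinarith [sq_nonneg (a^2)]
      _ ≤ Real.sin a ^ 2 := hs2
end
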